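/- Let {b_0,...,b_{K−1}} ⊂ ℝ^d be unit vectors with pairwise inner products at most 1 − Δ for some Δ > 0. Suppose f = Σ_j m_j b_j with all m_j ≥ 0 and Σ_j m_j ≤ 1, and ‖b_0 − f‖₂ ≤ ε. Then m_j ≤ ε/Δ for every j ≠ 0, and |1 − m_0| ≤ ε + 2K·ε/Δ. -/

import Mathlib

open scoped RealInnerProductSpace

/-- coefficient bounds from incoherence of unit vectors. -/
theorem stmt6 (K d : ℕ) (hK : 0 < K) (Δ ε : ℝ) (hΔ : 0 < Δ)
    (b : Fin K → EuclideanSpace ℝ (Fin d)) (hunit : ∀ j, ‖b j‖ = 1)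
    (hcorr : ∀ i j, i ≠ j → (⟪b i, b j⟫ : ℝ) ≤ 1 - Δ)
    (m : Fin K → ℝ) (hm : ∀ j, 0 ≤ m j) (hsum : ∑ j, m j ≤ 1)
    (hf : ‖b ⟨0, hK⟩ - ∑ j, m j • b j‖ ≤ ε) :
    (∀ j, j ≠ ⟨0, hK⟩ → m j ≤ ε / Δ) ∧
    |1 - m ⟨0, hK⟩| ≤ ε + 2 * K * (ε / Δ) := by
  set i0 : Fin K := ⟨0, hK⟩
  have hε0 : 0 ≤ ε := le_trans (norm_nonneg _) hf
  have hinner_le : ∀ j, (⟪b i0, b j⟫ : ℝ) ≤ 1 := fun j => by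
    have := real_inner_le_norm (b i0) (b j)
    simpa [hunit] using this
  have hself : (⟪b i0, b i0⟫ : ℝ) = 1 := by
    have := real_inner_self_eq_norm_sq (b i0)
    simp [hunit] at this
    rw [real_inner_self_eq_norm_sq, hunit]; norm_num
  have hexp : (⟪b i0, b i0 - ∑ j, m j • b j⟫ : ℝ)
      = 1 - ∑ j, m j * ⟪b i0, b j⟫ := by
    rw [inner_sub_right, inner_sum, hself]
    congr 1
    exact Finset.sum_congr rfl fun j _ => real_inner_smul_right _ _ _
  have hkey : |1 - ∑ j, m j * ⟪b i0, b j⟫| ≤ ε := by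
    rw [← hexp]
    calc |(⟪b i0, b i0 - ∑ j, m j • b j⟫ : ℝ)|
        ≤ ‖b i0‖ * ‖b i0 - ∑ j, m j • b j‖ := abs_real_inner_le_norm _ _
      _ ≤ ε := by rw [hunit]; simpa using hf
  -- rewrite 1 - ∑ m ⟪⟫ = ∑ m (1-⟪⟫) + (1 - ∑ m)
  have hsplit : (1 : ℝ) - ∑ j, m j * ⟪b i0, b j⟫
      = (∑ j, m j * (1 - ⟪b i0, b j⟫)) + (1 - ∑ j, m j) := by
    simp [mul_sub, Finset.sum_sub_distrib]
  have hterm : ∀ j, 0 ≤ m j * (1 - ⟪b i0, b j⟫) := fun j =>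
    mul_nonneg (hm j) (by linarith [hinner_le j])
  have hsumle : ∑ j, m j * (1 - ⟪b i0, b j⟫) ≤ ε := by
    have h1 : (1 : ℝ) - ∑ j, m j * ⟪b i0, b j⟫ ≤ ε := (abs_le.mp hkey).2
    rw [hsplit] at h1
    linarith
  have part1 : ∀ j, j ≠ i0 → m j ≤ ε / Δ := by
    intro j hj
    have hc : (⟪b i0, b j⟫ : ℝ) ≤ 1 - Δ := hcorr i0 j (Ne.symm hj)
    have h2 : m j * Δ ≤ m j * (1 - ⟪b i0, b j⟫) :=
      mul_le_mul_of_nonneg_left (by linarith) (hm j)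
    have h3 : m j * (1 - ⟪b i0, b j⟫) ≤ ∑ k, m k * (1 - ⟪b i0, b k⟫) :=
      Finset.single_le_sum (fun k _ => hterm k) (Finset.mem_univ j)
    have : m j * Δ ≤ ε := by linarith
    rw [le_div_iff₀ hΔ]; linarith
  refine ⟨part1, ?_⟩
  have hdec : ∑ j, m j * ⟪b i0, b j⟫
      = m i0 + ∑ j ∈ Finset.univ.erase i0, m j * ⟪b i0, b j⟫ := by
    rw [← Finset.add_sum_erase _ _ (Finset.mem_univ i0), hself, mul_one]
  have hrest : |∑ j ∈ Finset.univ.erase i0, m j * ⟪b i0, b j⟫|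
      ≤ (K - 1) * (ε / Δ) := by
    calc |∑ j ∈ Finset.univ.erase i0, m j * ⟪b i0, b j⟫|
        ≤ ∑ j ∈ Finset.univ.erase i0, |m j * ⟪b i0, b j⟫| :=
          Finset.abs_sum_le_sum_abs _ _
      _ ≤ ∑ _j ∈ Finset.univ.erase i0, (ε / Δ) := by
          apply Finset.sum_le_sum
          intro j hj
          have hj0 : j ≠ i0 := (Finset.mem_erase.mp hj).1
          have hmj : m j ≤ ε / Δ := part1 j hj0
          have habs : |⟪b i0, b j⟫| ≤ 1 := by
            have := abs_real_inner_le_norm (b i0) (b j)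
            simpa [hunit] using this
          calc |m j * ⟪b i0, b j⟫| = m j * |⟪b i0, b j⟫| := by
                rw [abs_mul, abs_of_nonneg (hm j)]
            _ ≤ m j * 1 := mul_le_mul_of_nonneg_left habs (hm j)
            _ ≤ ε / Δ := by rw [mul_one]; exact hmj
      _ = (K - 1) * (ε / Δ) := by
          rw [Finset.sum_const, Finset.card_erase_of_mem (Finset.mem_univ i0),
            Finset.card_univ, Fintype.card_fin, nsmul_eq_mul]
          have : (1 : ℝ) ≤ K := by exact_mod_cast hK
          rw [Nat.cast_sub hK]; norm_num
  have heq : (1 : ℝ) - m i0 = (1 - ∑ j, m j * ⟪b i0, b j⟫)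
      + ∑ j ∈ Finset.univ.erase i0, m j * ⟪b i0, b j⟫ := by
    rw [hdec]; ring
  have hεΔ : 0 ≤ ε / Δ := div_nonneg hε0 hΔ.le
  calc |1 - m i0| ≤ |1 - ∑ j, m j * ⟪b i0, b j⟫|
        + |∑ j ∈ Finset.univ.erase i0, m j * ⟪b i0, b j⟫| := by
        rw [heq]; exact abs_add_le _ _
    _ ≤ ε + (K - 1) * (ε / Δ) := add_le_add hkey hrest
    _ ≤ ε + 2 * K * (ε / Δ) := by
        have : ((K : ℝ) - 1) ≤ 2 * K := by
          have : (0:ℝ) ≤ K := Nat.cast_nonneg K; linarith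
        nlinarith
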